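/- Let M be a log-convex sequence with M₀ = 1 and quotients m_j := M_{j+1}/M_j, let L be a positive sequence with L₀ = 1, let 0 < α ≤ 2 and A > 0, and let f ∈ A_{L,A}(S_α). Then: (i) the series T_M(f)(z) := ∑_{j=0}^∞ 2^{-j}·(M_j/m_j^j)·f(m_j·z) converges normally on S_α and defines a holomorphic function on S_α; (ii) for every j ∈ ℕ₀ and z ∈ S_α, (T_M(f))^{(j)}(z) = ∑_{n=0}^∞ 2^{-n}·(M_n/m_n^n)·m_n^j·f^{(j)}(m_n·z); in particular, if c_j := lim_{z→0, z∈S_α} f^{(j)}(z) exists, then lim_{z→0, z∈S_α} (T_M(f))^{(j)}(z) = R_j·c_j, where R_j := ∑_{n=0}^∞ 2^{-n}·(M_n/m_n^n)·m_n^j; (iii) T_M(f) ∈ A_{LM,A}(S_α) with ‖T_M(f)‖_{LM,A} ≤ 2·‖f‖_{L,A}, where LM := (L_j·M_j)_j. Hence T_M : A_{L,A}(S_α) → A_{LM,A}(S_α) is a continuous linear operator. -/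

import Mathlib

open Filter Complex Asymptotics
open scoped Topology BigOperators

noncomputable section

/-- The open sector in ℂ of opening `α·π` bisected by the positive real axis. -/
def Sector (α : ℝ) : Set ℂ := {z : ℂ | z ≠ 0 ∧ |Complex.arg z| < α * Real.pi / 2}

/-- The Roumieu ultraholomorphic class `A_{{M}}(S_α)`. -/
def ASet (M : ℕ → ℝ) (α : ℝ) : Set (ℂ → ℂ) :=
  {f | DifferentiableOn ℂ f (Sector α) ∧
    ∃ h > (0:ℝ), ∃ C : ℝ, ∀ j : ℕ, ∀ z ∈ Sector α,
      ‖iteratedDerivWithin j f (Sector α) z‖ ≤ C * h ^ j * M j}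

/-- Equivalence of sequences: `a_j ≤ A·B^j·b_j` and `b_j ≤ A·B^j·a_j`. -/
def SeqEquiv (a b : ℕ → ℝ) : Prop :=
  ∃ A > (0:ℝ), ∃ B > (0:ℝ), ∀ j : ℕ, a j ≤ A * B ^ j * b j ∧ b j ≤ A * B ^ j * a j

/-- Log-convexity: `L_j² ≤ L_{j-1}·L_{j+1}` for `j ≥ 1`. -/
def IsLogConvexSeq (L : ℕ → ℝ) : Prop := ∀ j : ℕ, L (j+1) ^ 2 ≤ L j * L (j+2)

/-- `Gbar s j = j^{s·j}` (with the convention `0⁰ = 1`, automatic for `rpow`). -/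
def Gbar (s : ℝ) (j : ℕ) : ℝ := (j : ℝ) ^ (s * (j : ℝ))

/-- Weight matrix: positive sequences, first term 1, nondecreasing in the parameter. -/
def IsWeightMatrix (M : ℝ → ℕ → ℝ) : Prop :=
  (∀ p > (0:ℝ), ∀ j : ℕ, 0 < M p j) ∧ (∀ p > (0:ℝ), M p 0 = 1) ∧
    (∀ p q : ℝ, 0 < p → p ≤ q → ∀ j : ℕ, M p j ≤ M q j)

/-- The class `A_{{𝓜}}(S_α)` associated with a weight matrix. -/
def AMatSet (M : ℝ → ℕ → ℝ) (α : ℝ) : Set (ℂ → ℂ) := {f | ∃ p > (0:ℝ), f ∈ ASet (M p) α}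

/-- `M̌_j = M_j/j!`. -/
def checkSeq (N : ℕ → ℝ) (j : ℕ) : ℝ := N j / (Nat.factorial j : ℝ)

/-- Condition `(𝓜_{rai})`. -/
def Mrai (M : ℝ → ℕ → ℝ) : Prop :=
  ∀ p > (0:ℝ), ∃ C > (0:ℝ), ∃ p' > (0:ℝ), ∀ j k : ℕ, 1 ≤ j → j ≤ k →
    (checkSeq (M p) j) ^ ((j:ℝ)⁻¹) ≤ C * (checkSeq (M p') k) ^ ((k:ℝ)⁻¹)

/-- Condition `(𝓜_{C^ω})`. -/
def MComega (M : ℝ → ℕ → ℝ) : Prop :=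
  ∃ p > (0:ℝ),
    0 < Filter.liminf (fun j : ℕ => (checkSeq (M p) j) ^ ((j:ℝ)⁻¹)) Filter.atTop

/-- Condition `(𝓜_{dc})`. -/
def Mdc (M : ℝ → ℕ → ℝ) : Prop :=
  ∀ p > (0:ℝ), ∃ C > (0:ℝ), ∃ p' > (0:ℝ), ∀ j : ℕ, M p (j+1) ≤ C ^ (j+1) * M p' j

/-- `N°_k`: maximum of `N_ℓ·N_{j₁}⋯N_{j_ℓ}` over `j_i ∈ ℕ, j₁+⋯+j_ℓ = k`; `N°₀ = 1`. -/
def circSeq (N : ℕ → ℝ) (k : ℕ) : ℝ :=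
  if k = 0 then 1 else
    sSup {x : ℝ | ∃ (l : ℕ) (js : Fin l → ℕ), (∀ i, 1 ≤ js i) ∧ (∑ i, js i) = k ∧
      x = N l * ∏ i, N (js i)}

/-- `(rai)` for a single sequence. -/
def SeqRai (N : ℕ → ℝ) : Prop :=
  ∃ C > (0:ℝ), ∀ j k : ℕ, 1 ≤ j → j ≤ k →
    (checkSeq N j) ^ ((j:ℝ)⁻¹) ≤ C * (checkSeq N k) ^ ((k:ℝ)⁻¹)

/-- `(dc)` for a single sequence. -/
def SeqDc (N : ℕ → ℝ) : Prop := ∃ D ≥ (1:ℝ), ∀ j : ℕ, N (j+1) ≤ D ^ (j+1) * N j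

/-- `(FdB)` for a single sequence. -/
def SeqFdB (N : ℕ → ℝ) : Prop :=
  ∃ C ≥ (1:ℝ), ∃ h ≥ (1:ℝ), ∀ j : ℕ, circSeq (checkSeq N) j ≤ C * h ^ j * checkSeq N j

/-- Condition `(𝓜_{FdB})`. -/
def MFdB (M : ℝ → ℕ → ℝ) : Prop :=
  ∀ p > (0:ℝ), ∃ p' > (0:ℝ), ∃ C : ℝ, ∀ k : ℕ, 1 ≤ k →
    (circSeq (checkSeq (M p)) k / checkSeq (M p') k) ^ ((k:ℝ)⁻¹) ≤ C

/-- `L` is the log-convex minorant of `a` (within positive log-convex sequences). -/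
def IsLcMinorant (a L : ℕ → ℝ) : Prop :=
  (∀ j, 0 < L j) ∧ IsLogConvexSeq L ∧ (∀ j, L j ≤ a j) ∧
    ∀ L' : ℕ → ℝ, (∀ j, 0 < L' j) → IsLogConvexSeq L' → (∀ j, L' j ≤ a j) → ∀ j, L' j ≤ L j

/-- Holomorphic closedness of a class of functions on `S_α`. -/
def HolClosed (S : Set (ℂ → ℂ)) (α : ℝ) : Prop :=
  ∀ f ∈ S, ∀ U : Set ℂ, IsOpen U → closure (f '' Sector α) ⊆ U →
    ∀ g : ℂ → ℂ, DifferentiableOn ℂ g U → g ∘ f ∈ S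

/-- Inverse closedness of a class of functions on `S_α`. -/
def InvClosed (S : Set (ℂ → ℂ)) (α : ℝ) : Prop :=
  ∀ f ∈ S, (∃ c > (0:ℝ), ∀ z ∈ Sector α, c ≤ ‖f z‖) → (fun z => (f z)⁻¹) ∈ S

/-- The class `H_{{𝓜}}(U)` for a weight matrix. -/
def HMatClass (M : ℝ → ℕ → ℝ) (U : Set ℂ) : Set (ℂ → ℂ) :=
  {g | DifferentiableOn ℂ g U ∧ ∀ K : Set ℂ, K ⊆ U → IsCompact K →
    ∃ p > (0:ℝ), ∃ h > (0:ℝ), ∃ C : ℝ, ∀ j : ℕ, ∀ z ∈ K,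
      ‖iteratedDerivWithin j g U z‖ ≤ C * h ^ j * M p j}

/-- The class `H_{{M}}(U)` for a single sequence. -/
def HSeqClass (N : ℕ → ℝ) (U : Set ℂ) : Set (ℂ → ℂ) :=
  {g | DifferentiableOn ℂ g U ∧ ∀ K : Set ℂ, K ⊆ U → IsCompact K →
    ∃ h > (0:ℝ), ∃ C : ℝ, ∀ j : ℕ, ∀ z ∈ K,
      ‖iteratedDerivWithin j g U z‖ ≤ C * h ^ j * N j}

/-- Closedness under composition for the matrix class. -/
def CompClosedMat (M : ℝ → ℕ → ℝ) (α : ℝ) : Prop :=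
  ∀ f ∈ AMatSet M α, ∀ U : Set ℂ, IsOpen U → closure (f '' Sector α) ⊆ U →
    ∀ g ∈ HMatClass M U, g ∘ f ∈ AMatSet M α

/-- Closedness under composition for a single-sequence class. -/
def CompClosedSeq (N : ℕ → ℝ) (α : ℝ) : Prop :=
  ∀ f ∈ ASet N α, ∀ U : Set ℂ, IsOpen U → closure (f '' Sector α) ⊆ U →
    ∀ g ∈ HSeqClass N U, g ∘ f ∈ ASet N α

/-- `f` is characteristic in `A_{{L}}(S_α)`. -/
def Characteristic (L : ℕ → ℝ) (α : ℝ) (f : ℂ → ℂ) : Prop :=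
  f ∈ ASet L α ∧ ∀ N : ℕ → ℝ, (∀ j, 0 < N j) → N 0 = 1 →
    f ∈ ASet N α → ASet N α ⊆ ASet L α → ASet N α = ASet L α

/-- Coefficient `2^{-n} M_n/m_n^n` of the `T_M`-transform. -/
def coefT (M : ℕ → ℝ) (n : ℕ) : ℝ := (1/2:ℝ)^n * (M n / (M (n+1) / M n) ^ n)

/-- The sequence of quotients `m_n = M_{n+1}/M_n`. -/
def quotSeq (M : ℕ → ℝ) (n : ℕ) : ℝ := M (n+1) / M n

/-- `R_j = ∑ 2^{-n}(M_n/m_n^n) m_n^j` (as a real tsum). -/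
def Rseq (M : ℕ → ℝ) (j : ℕ) : ℝ := ∑' n : ℕ, coefT M n * (quotSeq M n) ^ j

/-- The `T_M`-transform. -/
def Ttrans (M : ℕ → ℝ) (f : ℂ → ℂ) (z : ℂ) : ℂ :=
  ∑' n : ℕ, (coefT M n : ℂ) * f ((quotSeq M n : ℂ) * z)

/-- Weight function: continuous, nondecreasing, `ω(0)=0`, nonnegative, `ω(t)→∞`. -/
def IsWeightFunction (ω : ℝ → ℝ) : Prop :=
  ContinuousOn ω (Set.Ici 0) ∧ MonotoneOn ω (Set.Ici 0) ∧ ω 0 = 0 ∧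
    (∀ t ≥ (0:ℝ), 0 ≤ ω t) ∧ Filter.Tendsto ω Filter.atTop Filter.atTop

def Om0 (ω : ℝ → ℝ) : Prop := ∀ t ∈ Set.Icc (0:ℝ) 1, ω t = 0
def Om1 (ω : ℝ → ℝ) : Prop := ∃ L ≥ (1:ℝ), ∀ t ≥ (0:ℝ), ω (2*t) ≤ L * (ω t + 1)
def Om2 (ω : ℝ → ℝ) : Prop := ∃ C > (0:ℝ), ∃ t₀ : ℝ, ∀ t ≥ t₀, ω t ≤ C * t
def Om3 (ω : ℝ → ℝ) : Prop := Real.log =o[Filter.atTop] ω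
def Om4 (ω : ℝ → ℝ) : Prop := ConvexOn ℝ Set.univ (fun t => ω (Real.exp t))
def Om5 (ω : ℝ → ℝ) : Prop := ω =o[Filter.atTop] (fun t => t)
def Om6 (ω : ℝ → ℝ) : Prop := ∃ H ≥ (1:ℝ), ∀ t ≥ (0:ℝ), 2 * ω t ≤ ω (H * t) + H

/-- Condition `(α₀)` for a weight function. -/
def Alpha0 (ω : ℝ → ℝ) : Prop :=
  ∃ C ≥ (1:ℝ), ∃ t₀ ≥ (0:ℝ), ∀ lam ≥ (1:ℝ), ∀ t ≥ t₀, ω (lam * t) ≤ C * lam * ω t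

/-- The set `W₀`. -/
def InW0 (ω : ℝ → ℝ) : Prop := IsWeightFunction ω ∧ Om0 ω ∧ Om3 ω ∧ Om4 ω

/-- The set `W`. -/
def InW (ω : ℝ → ℝ) : Prop := InW0 ω ∧ Om1 ω

/-- The Legendre–Fenchel–Young conjugate `φ*_ω`. -/
def phiStar (ω : ℝ → ℝ) (x : ℝ) : ℝ :=
  sSup {r : ℝ | ∃ y : ℝ, 0 ≤ y ∧ r = x * y - ω (Real.exp y)}

/-- The weight matrix associated with `ω`: `W^{(ℓ)}_j = exp((1/ℓ)·φ*_ω(ℓj))`. -/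
def Wmat (ω : ℝ → ℝ) (ℓ : ℝ) (j : ℕ) : ℝ := Real.exp ((1/ℓ) * phiStar ω (ℓ * (j:ℝ)))

/-- The class `A_{{ω}}(S_α)`. -/
def AOmegaSet (ω : ℝ → ℝ) (α : ℝ) : Set (ℂ → ℂ) :=
  {f | DifferentiableOn ℂ f (Sector α) ∧ ∃ ℓ > (0:ℝ), ∃ C : ℝ,
    ∀ j : ℕ, ∀ z ∈ Sector α, ‖iteratedDerivWithin j f (Sector α) z‖ ≤ C * Wmat ω ℓ j}

/-- Closedness under composition for the `ω`-class. -/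
def CompClosedOmega (ω : ℝ → ℝ) (α : ℝ) : Prop :=
  ∀ f ∈ AOmegaSet ω α, ∀ U : Set ℂ, IsOpen U → closure (f '' Sector α) ⊆ U →
    ∀ g ∈ HMatClass (Wmat ω) U, g ∘ f ∈ AOmegaSet ω α

/-- One-sided matrix comparison `𝓜 {⪯} 𝓛`: `sup_{j≥1}(M^{(p)}_j/L^{(q)}_j)^{1/j} < ∞`. -/
def MatPreceq (M L : ℝ → ℕ → ℝ) : Prop :=
  ∀ p > (0:ℝ), ∃ q > (0:ℝ), ∃ C : ℝ, ∀ j : ℕ, 1 ≤ j → (M p j / L q j) ^ ((j:ℝ)⁻¹) ≤ C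

/-- `R`-equivalence of weight matrices. -/
def REquivMat (M L : ℝ → ℕ → ℝ) : Prop := MatPreceq M L ∧ MatPreceq L M

lemma isOpen_sector {α : ℝ} (hα2 : α ≤ 2) : IsOpen (Sector α) := by
  have hset : Sector α
      = {z : ℂ | z ∈ Complex.slitPlane ∧ |Complex.arg z| < α * Real.pi / 2} := by
    ext z
    constructor
    · rintro ⟨hz0, hz⟩
      refine ⟨?_, hz⟩
      by_contra h
      rw [Complex.mem_slitPlane_iff] at h
      push_neg at h
      have hre : z.re < 0 := by
        rcases lt_or_eq_of_le h.1 with h' | h'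
        · exact h'
        · exact absurd (Complex.ext (by simpa using h') (by simpa using h.2)) hz0
      have : Complex.arg z = Real.pi := Complex.arg_eq_pi_iff.2 ⟨hre, h.2⟩
      have hπ : |Complex.arg z| = Real.pi := by
        rw [this, abs_of_pos Real.pi_pos]
      have : α * Real.pi / 2 ≤ Real.pi := by nlinarith [Real.pi_pos]
      linarith [hz, hπ ▸ hz]
    · rintro ⟨hz0, hz⟩
      exact ⟨Complex.slitPlane_ne_zero hz0, hz⟩
  rw [hset, isOpen_iff_mem_nhds]
  rintro z ⟨h1, h2⟩
  have hca : ContinuousAt (fun w : ℂ => |Complex.arg w|) z :=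
    (Complex.continuousAt_arg h1).abs
  have hev1 : ∀ᶠ w in 𝓝 z, w ∈ Complex.slitPlane :=
    Complex.isOpen_slitPlane.eventually_mem h1
  have hev2 : ∀ᶠ w in 𝓝 z, |Complex.arg w| < α * Real.pi / 2 :=
    hca.eventually_lt continuousAt_const h2
  filter_upwards [hev1, hev2] with w hw1 hw2 using ⟨hw1, hw2⟩

lemma sector_mul_mem {α : ℝ} {z : ℂ} (hz : z ∈ Sector α) {t : ℝ} (ht : 0 < t) :
    (t : ℂ) * z ∈ Sector α := by
  obtain ⟨hz0, hza⟩ := hz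
  refine ⟨mul_ne_zero (by exact_mod_cast ht.ne') hz0, ?_⟩
  rw [Complex.arg_real_mul z ht]
  exact hza

lemma one_mem_sector {α : ℝ} (hα : 0 < α) : (1 : ℂ) ∈ Sector α := by
  refine ⟨one_ne_zero, ?_⟩
  rw [Complex.arg_one, abs_zero]
  positivity





section seq
variable {M : ℕ → ℝ}

lemma quot_pos (hMpos : ∀ j, 0 < M j) (n : ℕ) : 0 < quotSeq M n := div_pos (hMpos _) (hMpos _)

lemma quot_mono (hMpos : ∀ j, 0 < M j) (hMlc : IsLogConvexSeq M) : Monotone (quotSeq M) := by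
  apply monotone_nat_of_le_succ
  intro n
  have h := hMlc n
  unfold quotSeq
  rw [div_le_div_iff₀ (hMpos n) (hMpos (n+1))]
  nlinarith [hMpos n, hMpos (n+1), hMpos (n+2)]

lemma mul_quot (hMpos : ∀ j, 0 < M j) (n : ℕ) : M n * quotSeq M n = M (n+1) := by
  unfold quotSeq; rw [mul_div_assoc']; exact mul_div_cancel_left₀ _ (hMpos n).ne'

lemma seq_lemma1 (hMpos : ∀ j, 0 < M j) (hMlc : IsLogConvexSeq M) (a b : ℕ) : M a * (quotSeq M a) ^ b ≤ M (a + b) := by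
  induction b with
  | zero => simp
  | succ b ih =>
      have hq : quotSeq M a ≤ quotSeq M (a + b) := quot_mono hMpos hMlc (Nat.le_add_right a b)
      calc M a * quotSeq M a ^ (b+1) = (M a * quotSeq M a ^ b) * quotSeq M a := by ring
        _ ≤ M (a + b) * quotSeq M (a + b) := by
            apply mul_le_mul ih hq (le_of_lt (quot_pos hMpos a)) (le_of_lt (hMpos _))
        _ = M (a + b + 1) := mul_quot hMpos _

lemma seq_lemma2 (hMpos : ∀ j, 0 < M j) (hMlc : IsLogConvexSeq M) (a b : ℕ) : M (a + b) ≤ M a * (quotSeq M (a + b)) ^ b := by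
  induction b with
  | zero => simp
  | succ b ih =>
      have hq : quotSeq M (a + b) ≤ quotSeq M (a + b + 1) :=
        quot_mono hMpos hMlc (Nat.le_succ _)
      have hq0 : (0:ℝ) ≤ quotSeq M (a + b) := le_of_lt (quot_pos hMpos _)
      calc M (a + b + 1) = M (a + b) * quotSeq M (a + b) := (mul_quot hMpos _).symm
        _ ≤ (M a * quotSeq M (a + b) ^ b) * quotSeq M (a + b) := by
            apply mul_le_mul_of_nonneg_right ih hq0
        _ = M a * quotSeq M (a + b) ^ (b+1) := by ring
        _ ≤ M a * quotSeq M (a + b + 1) ^ (b+1) := by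
            apply mul_le_mul_of_nonneg_left (pow_le_pow_left₀ hq0 hq _) (le_of_lt (hMpos a))

lemma coefT_pos (hMpos : ∀ j, 0 < M j) (n : ℕ) : 0 < coefT M n := by
  unfold coefT
  have := hMpos n; have := quot_pos hMpos n; unfold quotSeq at this; positivity

lemma key_bound (hMpos : ∀ j, 0 < M j) (hMlc : IsLogConvexSeq M) (n j : ℕ) : coefT M n * (quotSeq M n) ^ j ≤ (1/2:ℝ)^n * M j := by
  have hq := quot_pos hMpos n
  have hqn : (0:ℝ) < quotSeq M n ^ n := pow_pos hq n
  have hmain : M n * quotSeq M n ^ j ≤ M j * quotSeq M n ^ n := by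
    rcases le_total n j with h | h
    · obtain ⟨b, rfl⟩ := Nat.exists_eq_add_of_le h
      calc M n * quotSeq M n ^ (n + b) = (M n * quotSeq M n ^ b) * quotSeq M n ^ n := by ring
        _ ≤ M (n + b) * quotSeq M n ^ n :=
            mul_le_mul_of_nonneg_right (seq_lemma1 hMpos hMlc n b) (le_of_lt hqn)
    · obtain ⟨b, rfl⟩ := Nat.exists_eq_add_of_le h
      calc M (j + b) * quotSeq M (j+b) ^ j
          ≤ (M j * quotSeq M (j + b) ^ b) * quotSeq M (j+b) ^ j :=
            mul_le_mul_of_nonneg_right (seq_lemma2 hMpos hMlc j b) (le_of_lt (pow_pos (quot_pos hMpos _) j))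
        _ = M j * quotSeq M (j+b) ^ (j + b) := by ring
  have : coefT M n = (1/2:ℝ)^n * (M n / quotSeq M n ^ n) := rfl
  rw [this, mul_assoc]
  refine mul_le_mul_of_nonneg_left ?_ (by positivity : (0:ℝ) ≤ (1/2:ℝ)^n)
  rw [div_mul_eq_mul_div, div_le_iff₀ hqn]
  exact hmain

end seq

lemma iteratedDerivWithin_of_isOpen'' {f : ℂ → ℂ} {s : Set ℂ} (hs : IsOpen s) {x : ℂ}
    (hx : x ∈ s) (n : ℕ) : iteratedDerivWithin n f s x = iteratedDeriv n f x := by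
  simp only [iteratedDerivWithin, iteratedDeriv, iteratedFDerivWithin_of_isOpen n hs hx]

lemma analyticOnNhd_iteratedDeriv {f : ℂ → ℂ} {s : Set ℂ} (hs : IsOpen s)
    (hf : DifferentiableOn ℂ f s) (n : ℕ) : AnalyticOnNhd ℂ (iteratedDeriv n f) s := by
  induction n with
  | zero => rw [iteratedDeriv_zero]; exact hf.analyticOnNhd hs
  | succ n ih => rw [iteratedDeriv_succ]; exact ih.deriv





/-- the `j`-th term family of the differentiated series -/
def Gfun (M : ℕ → ℝ) (f : ℂ → ℂ) (j n : ℕ) (w : ℂ) : ℂ :=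
  ((coefT M n * (quotSeq M n) ^ j : ℝ) : ℂ) * iteratedDeriv j f ((quotSeq M n : ℂ) * w)

section main
variable {M : ℕ → ℝ} {α : ℝ} {f : ℂ → ℂ}

lemma Gfun_diff (hα2 : α ≤ 2) (hMpos : ∀ j, 0 < M j)
    (hf : DifferentiableOn ℂ f (Sector α)) (j n : ℕ) :
    DifferentiableOn ℂ (Gfun M f j n) (Sector α) := by
  intro z hz
  have hmem : (quotSeq M n : ℂ) * z ∈ Sector α := sector_mul_mem hz (quot_pos hMpos n)
  have h1 : DifferentiableAt ℂ (iteratedDeriv j f) ((quotSeq M n : ℂ) * z) :=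
    (analyticOnNhd_iteratedDeriv (isOpen_sector hα2) hf j _ hmem).differentiableAt
  have h2 : DifferentiableAt ℂ (fun w : ℂ => iteratedDeriv j f ((quotSeq M n : ℂ) * w)) z :=
    h1.comp z (differentiableAt_id.const_mul _)
  exact (h2.const_mul _).differentiableWithinAt

lemma Gfun_deriv (hα2 : α ≤ 2) (hMpos : ∀ j, 0 < M j)
    (hf : DifferentiableOn ℂ f (Sector α)) (j n : ℕ) {z : ℂ} (hz : z ∈ Sector α) :
    deriv (Gfun M f j n) z = Gfun M f (j+1) n z := by
  have hmem : (quotSeq M n : ℂ) * z ∈ Sector α := sector_mul_mem hz (quot_pos hMpos n)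
  have h1 : HasDerivAt (iteratedDeriv j f)
      (iteratedDeriv (j+1) f ((quotSeq M n : ℂ) * z)) ((quotSeq M n : ℂ) * z) := by
    have := (analyticOnNhd_iteratedDeriv (isOpen_sector hα2) hf j _ hmem).differentiableAt.hasDerivAt
    rwa [show deriv (iteratedDeriv j f) ((quotSeq M n : ℂ) * z)
        = iteratedDeriv (j+1) f ((quotSeq M n : ℂ) * z) from by rw [iteratedDeriv_succ]] at this
  have hmul : HasDerivAt (fun w : ℂ => (quotSeq M n : ℂ) * w) ((quotSeq M n : ℂ)) z := by
    simpa using (hasDerivAt_id z).const_mul ((quotSeq M n : ℝ) : ℂ)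
  have h2 := (h1.comp z hmul).const_mul ((coefT M n * (quotSeq M n) ^ j : ℝ) : ℂ)
  have h3 : deriv (fun w => ((coefT M n * (quotSeq M n) ^ j : ℝ) : ℂ) *
      ((iteratedDeriv j f) ∘ fun w : ℂ => (quotSeq M n : ℂ) * w) w) z
      = ((coefT M n * (quotSeq M n) ^ j : ℝ) : ℂ) *
        (iteratedDeriv (j+1) f ((quotSeq M n : ℂ) * z) * (quotSeq M n : ℂ)) := h2.deriv
  have h4 : deriv (Gfun M f j n) z = ((coefT M n * (quotSeq M n) ^ j : ℝ) : ℂ) *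
        (iteratedDeriv (j+1) f ((quotSeq M n : ℂ) * z) * (quotSeq M n : ℂ)) := by
    rw [← h3]; rfl
  rw [h4]
  unfold Gfun
  push_cast
  ring

lemma Gfun_bound (hα2 : α ≤ 2) (hMpos : ∀ j, 0 < M j) (hMlc : IsLogConvexSeq M)
    {L : ℕ → ℝ} {A C₀ : ℝ}
    (hfC : ∀ j : ℕ, ∀ z ∈ Sector α,
      ‖iteratedDerivWithin j f (Sector α) z‖ ≤ C₀ * A ^ j * L j)
    (j n : ℕ) {w : ℂ} (hw : w ∈ Sector α) :
    ‖Gfun M f j n w‖ ≤ (1/2:ℝ)^n * (M j * (C₀ * A ^ j * L j)) := by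
  have hmem : (quotSeq M n : ℂ) * w ∈ Sector α := sector_mul_mem hw (quot_pos hMpos n)
  have hd : iteratedDeriv j f ((quotSeq M n : ℂ) * w)
      = iteratedDerivWithin j f (Sector α) ((quotSeq M n : ℂ) * w) :=
    (iteratedDerivWithin_of_isOpen'' (isOpen_sector hα2) hmem j).symm
  have hpos : 0 < coefT M n * quotSeq M n ^ j :=
    mul_pos (coefT_pos hMpos n) (pow_pos (quot_pos hMpos n) j)
  have h1 : ‖Gfun M f j n w‖ = (coefT M n * quotSeq M n ^ j) *
      ‖iteratedDerivWithin j f (Sector α) ((quotSeq M n : ℂ) * w)‖ := by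
    unfold Gfun
    rw [norm_mul, hd, Complex.norm_real, Real.norm_eq_abs, abs_of_pos hpos]
  rw [h1, ← mul_assoc ((1/2:ℝ)^n)]
  exact mul_le_mul (key_bound hMpos hMlc n j) (hfC j _ hmem) (norm_nonneg _)
    (mul_nonneg (by positivity) (hMpos j).le)

lemma Ttrans_eq_tsum_Gfun (hα2 : α ≤ 2) (hMpos : ∀ j, 0 < M j) (hMlc : IsLogConvexSeq M)
    (hf : DifferentiableOn ℂ f (Sector α))
    {L : ℕ → ℝ} {A C₀ : ℝ}
    (hfC : ∀ j : ℕ, ∀ z ∈ Sector α,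
      ‖iteratedDerivWithin j f (Sector α) z‖ ≤ C₀ * A ^ j * L j)
    (j : ℕ) : ∀ z ∈ Sector α, iteratedDeriv j (Ttrans M f) z = ∑' n : ℕ, Gfun M f j n z := by
  induction j with
  | zero =>
      intro z hz
      rw [iteratedDeriv_zero]
      unfold Ttrans Gfun
      exact tsum_congr fun n => by rw [iteratedDeriv_zero]; push_cast; ring
  | succ j ih =>
      intro z hz
      have hbsum : Summable (fun n : ℕ => (1/2:ℝ)^n * (M j * (C₀ * A ^ j * L j))) :=
        (summable_geometric_of_lt_one (by norm_num) (by norm_num)).mul_right _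
      have hEq : iteratedDeriv j (Ttrans M f) =ᶠ[𝓝 z] fun w => ∑' n : ℕ, Gfun M f j n w := by
        filter_upwards [(isOpen_sector hα2).eventually_mem hz] with w hw using ih w hw
      rw [iteratedDeriv_succ, hEq.deriv_eq]
      have hsum := hasSum_deriv_of_summable_norm hbsum (Gfun_diff hα2 hMpos hf j)
        (isOpen_sector hα2) (fun n w hw => Gfun_bound hα2 hMpos hMlc hfC j n hw) hz
      rw [← hsum.tsum_eq]
      exact tsum_congr fun n => Gfun_deriv hα2 hMpos hf j n hz

end main


/-- the `T_M`-transform of `f ∈ A_{L,A}(S_α)`: normal convergence and holomorphy,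
termwise differentiation and limits at `0`, and the bound `‖T_M f‖_{LM,A} ≤ 2‖f‖_{L,A}`. -/
theorem stmt_4 (M : ℕ → ℝ) (hMpos : ∀ j, 0 < M j) (hM0 : M 0 = 1) (hMlc : IsLogConvexSeq M)
    (L : ℕ → ℝ) (hLpos : ∀ j, 0 < L j) (hL0 : L 0 = 1)
    (α : ℝ) (hα : 0 < α) (hα2 : α ≤ 2) (A : ℝ) (hA : 0 < A)
    (f : ℂ → ℂ) (hf : DifferentiableOn ℂ f (Sector α))
    (C₀ : ℝ)
    (hfC : ∀ j : ℕ, ∀ z ∈ Sector α,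
      ‖iteratedDerivWithin j f (Sector α) z‖ ≤ C₀ * A ^ j * L j) :
    -- (i) normal convergence on S_α and holomorphy of T_M(f)
    ((∃ u : ℕ → ℝ, Summable u ∧ ∀ n : ℕ, ∀ z ∈ Sector α,
        ‖(coefT M n : ℂ) * f ((quotSeq M n : ℂ) * z)‖ ≤ u n) ∧
      (∀ z ∈ Sector α, Summable (fun n : ℕ => (coefT M n : ℂ) * f ((quotSeq M n : ℂ) * z))) ∧
      DifferentiableOn ℂ (Ttrans M f) (Sector α)) ∧
    -- (ii) termwise differentiation
    ((∀ j : ℕ, ∀ z ∈ Sector α,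
        iteratedDerivWithin j (Ttrans M f) (Sector α) z =
          ∑' n : ℕ, ((coefT M n * (quotSeq M n) ^ j : ℝ) : ℂ) *
            iteratedDerivWithin j f (Sector α) ((quotSeq M n : ℂ) * z)) ∧
      (∀ j : ℕ, ∀ c : ℂ,
        Filter.Tendsto (iteratedDerivWithin j f (Sector α))
          (nhdsWithin 0 (Sector α)) (nhds c) →
        Filter.Tendsto (iteratedDerivWithin j (Ttrans M f) (Sector α))
          (nhdsWithin 0 (Sector α)) (nhds ((Rseq M j : ℂ) * c)))) ∧
    -- (iii) T_M(f) ∈ A_{LM,A}(S_α) with norm at most 2‖f‖_{L,A}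
    (∀ j : ℕ, ∀ z ∈ Sector α,
      ‖iteratedDerivWithin j (Ttrans M f) (Sector α) z‖ ≤ 2 * C₀ * A ^ j * (L j * M j)) := by
  have hs : IsOpen (Sector α) := isOpen_sector hα2
  have hq := quot_pos hMpos
  have hmem : ∀ (n : ℕ) {z : ℂ}, z ∈ Sector α → (quotSeq M n : ℂ) * z ∈ Sector α :=
    fun n {z} hz => sector_mul_mem hz (hq n)
  have hbsum : ∀ j : ℕ, Summable (fun n : ℕ => (1/2:ℝ)^n * (M j * (C₀ * A ^ j * L j))) :=
    fun j => (summable_geometric_of_lt_one (by norm_num) (by norm_num)).mul_right _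
  have hG0 : ∀ n : ℕ, ∀ z : ℂ,
      (coefT M n : ℂ) * f ((quotSeq M n : ℂ) * z) = Gfun M f 0 n z := by
    intro n z
    unfold Gfun
    rw [iteratedDeriv_zero]
    push_cast
    ring
  have hTj := Ttrans_eq_tsum_Gfun hα2 hMpos hMlc hf hfC
  have hTjW : ∀ j : ℕ, ∀ z ∈ Sector α, iteratedDerivWithin j (Ttrans M f) (Sector α) z
      = ∑' n : ℕ, Gfun M f j n z := fun j z hz =>
    (iteratedDerivWithin_of_isOpen'' hs hz j).trans (hTj j z hz)
  have hbound : ∀ j n : ℕ, ∀ z ∈ Sector α,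
      ‖Gfun M f j n z‖ ≤ (1/2:ℝ)^n * (M j * (C₀ * A ^ j * L j)) :=
    fun j n z hz => Gfun_bound hα2 hMpos hMlc hfC j n hz
  refine ⟨⟨⟨fun n => (1/2:ℝ)^n * (M 0 * (C₀ * A ^ 0 * L 0)), hbsum 0, ?_⟩, ?_, ?_⟩,
    ⟨?_, ?_⟩, ?_⟩
  · intro n z hz
    rw [hG0 n z]
    exact hbound 0 n z hz
  · intro z hz
    apply Summable.of_norm_bounded (hbsum 0)
    intro n
    rw [hG0 n z]
    exact hbound 0 n z hz
  · have hT : Ttrans M f = fun w => ∑' n : ℕ, Gfun M f 0 n w := by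
      funext w
      exact tsum_congr fun n => hG0 n w
    rw [hT]
    exact differentiableOn_tsum_of_summable_norm (hbsum 0) (Gfun_diff hα2 hMpos hf 0) hs
      (fun n w hw => hbound 0 n w hw)
  · intro j z hz
    rw [hTjW j z hz]
    refine tsum_congr fun n => ?_
    rw [iteratedDerivWithin_of_isOpen'' hs (hmem n hz) j]
    rfl
  · intro j c htend
    have hrle : ∀ n, coefT M n * quotSeq M n ^ j ≤ (1/2:ℝ)^n * M j :=
      fun n => key_bound hMpos hMlc n j
    have hmain : Tendsto (fun z : ℂ => ∑' n : ℕ, Gfun M f j n z) (𝓝[Sector α] 0)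
        (𝓝 (∑' n : ℕ, ((coefT M n * quotSeq M n ^ j : ℝ) : ℂ) * c)) := by
      apply tendsto_tsum_of_dominated_convergence (hbsum j)
      · intro n
        have hmul : Tendsto (fun z : ℂ => (quotSeq M n : ℂ) * z) (𝓝[Sector α] 0)
            (𝓝[Sector α] 0) := by
          apply tendsto_nhdsWithin_of_tendsto_nhds_of_eventually_within
          · have h0 : Tendsto (fun z : ℂ => (quotSeq M n : ℂ) * z) (𝓝 0)
                (𝓝 ((quotSeq M n : ℂ) * 0)) := (continuous_const.mul continuous_id).tendsto 0
            simpa using h0.mono_left nhdsWithin_le_nhds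
          · exact eventually_mem_nhdsWithin.mono fun z hz => hmem n hz
        have h2 : Tendsto (fun z : ℂ => iteratedDerivWithin j f (Sector α)
            ((quotSeq M n : ℂ) * z)) (𝓝[Sector α] 0) (𝓝 c) := htend.comp hmul
        have h3 := h2.const_mul ((coefT M n * quotSeq M n ^ j : ℝ) : ℂ)
        apply h3.congr'
        filter_upwards [eventually_mem_nhdsWithin] with z hz
        unfold Gfun
        rw [iteratedDerivWithin_of_isOpen'' hs (hmem n hz) j]
      · filter_upwards [eventually_mem_nhdsWithin] with z hz
        intro n
        exact hbound j n z hz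
    have htsum : ∑' n : ℕ, ((coefT M n * quotSeq M n ^ j : ℝ) : ℂ) * c
        = ((Rseq M j : ℝ) : ℂ) * c := by
      rw [tsum_mul_right]
      congr 1
      exact (Complex.ofReal_tsum fun n => coefT M n * quotSeq M n ^ j).symm
    rw [← htsum]
    apply hmain.congr'
    filter_upwards [eventually_mem_nhdsWithin] with z hz
    exact (hTjW j z hz).symm
  · intro j z hz
    rw [hTjW j z hz]
    have h2 : HasSum (fun n : ℕ => (1/2:ℝ)^n * (M j * (C₀ * A ^ j * L j)))
        (2 * (M j * (C₀ * A ^ j * L j))) := by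
      have hg := hasSum_geometric_of_lt_one (by norm_num : (0:ℝ) ≤ 1/2) (by norm_num : (1/2:ℝ) < 1)
      have h := hg.mul_right (M j * (C₀ * A ^ j * L j))
      rw [show (1 - 1/2 : ℝ)⁻¹ = 2 by norm_num] at h
      exact h
    calc ‖∑' n : ℕ, Gfun M f j n z‖ ≤ 2 * (M j * (C₀ * A ^ j * L j)) :=
        tsum_of_norm_bounded h2 fun n => hbound j n z hz
      _ = 2 * C₀ * A ^ j * (L j * M j) := by ring
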